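/- Let s be a random vector in {-1,1}^M with i.i.d. uniform (mean-zero) entries and let β ≤ 1. If p ∈ ℝ^M satisfies the self-consistency equation p = E_s[ s · tanh(β s·p) ] (componentwise, i.e. p_μ = E[s_μ tanh(β Σ_ν s_ν p_ν)] for all μ), then p = 0. -/

import Mathlib

open Finset Real

/-- `tanh x < x` for positive `x`. -/
lemma tanh_lt_self_aux {x : ℝ} (hx : 0 < x) : Real.tanh x < x := by
  have hkey : ∀ y : ℝ, HasDerivAt (fun t => t * Real.cosh t - Real.sinh t)
      (y * Real.sinh y) y := by
    intro y
    have h := ((hasDerivAt_id y).mul (Real.hasDerivAt_cosh y)).sub (Real.hasDerivAt_sinh y)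
    convert h using 1 <;> try rfl
    simp [id_eq]
  have hmono : StrictMonoOn (fun t => t * Real.cosh t - Real.sinh t) (Set.Ici 0) := by
    apply strictMonoOn_of_deriv_pos (convex_Ici 0)
    · exact (Continuous.sub (continuous_id.mul Real.continuous_cosh)
        Real.continuous_sinh).continuousOn
    · intro y hy
      rw [interior_Ici] at hy
      rw [(hkey y).deriv]
      exact mul_pos hy (by rwa [Real.sinh_pos_iff])
  have h0 : (fun t => t * Real.cosh t - Real.sinh t) 0 < (fun t => t * Real.cosh t - Real.sinh t) x :=
    hmono (Set.mem_Ici.2 le_rfl) (Set.mem_Ici.2 hx.le) hx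
  simp only [zero_mul, Real.cosh_zero, Real.sinh_zero, sub_zero, zero_sub, neg_lt] at h0
  have hc := Real.cosh_pos x
  rw [Real.tanh_eq_sinh_div_cosh, div_lt_iff₀ hc]
  nlinarith [h0]

/-- key inequality: `z * tanh (β z) ≤ z ^ 2` for `0 ≤ β ≤ 1`, strict when `z ≠ 0`. -/
lemma mul_tanh_lt_sq {β : ℝ} (hβ0 : 0 ≤ β) (hβ1 : β ≤ 1) {z : ℝ} (hz : z ≠ 0) :
    z * Real.tanh (β * z) < z ^ 2 := by
  have main : ∀ w : ℝ, 0 < w → w * Real.tanh (β * w) < w ^ 2 := by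
    intro w hw
    have htanh : Real.tanh (β * w) < w := by
      rcases eq_or_lt_of_le hβ0 with hβ | hβ
      · simp [← hβ, Real.tanh_zero, hw]
      · have h1 : Real.tanh (β * w) < β * w := tanh_lt_self_aux (mul_pos hβ hw)
        nlinarith
    nlinarith
  rcases lt_or_gt_of_ne hz with h | h
  · have := main (-z) (by linarith)
    rw [mul_neg, Real.tanh_neg] at this
    nlinarith
  · exact main z h

lemma mul_tanh_le_sq {β : ℝ} (hβ0 : 0 ≤ β) (hβ1 : β ≤ 1) (z : ℝ) :
    z * Real.tanh (β * z) ≤ z ^ 2 := by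
  rcases eq_or_ne z 0 with rfl | hz
  · simp
  · exact (mul_tanh_lt_sq hβ0 hβ1 hz).le

/-- orthogonality of distinct sign coordinates. -/
lemma sign_orth {M : ℕ} {μ ν : Fin M} (hne : μ ≠ ν) :
    ∑ s : Fin M → Bool, (if s μ then (1:ℝ) else -1) * (if s ν then (1:ℝ) else -1) = 0 := by
  set f : (Fin M → Bool) → ℝ :=
    fun s => (if s μ then (1:ℝ) else -1) * (if s ν then (1:ℝ) else -1) with hf
  set flip : (Fin M → Bool) → (Fin M → Bool) := fun s => Function.update s μ (!(s μ)) with hflip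
  have hinv : Function.Involutive flip := by
    intro s
    funext x
    by_cases hx : x = μ
    · subst hx; simp [hflip, Function.update]
    · simp [hflip, Function.update, hx]
  have hsum : ∑ s, f s = ∑ s, f (flip s) :=
    (Fintype.sum_bijective flip hinv.bijective (f ∘ flip) f (fun x => rfl)).symm
  have hneg : ∀ s, f (flip s) = - f s := by
    intro s
    have h1 : (flip s) μ = !(s μ) := Function.update_self μ _ s
    have h2 : (flip s) ν = s ν := Function.update_of_ne (Ne.symm hne) _ s
    rw [hf]
    simp only [h1, h2]
    cases s μ <;> cases s ν <;> norm_num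
  rw [Finset.sum_congr rfl (fun s _ => hneg s), Finset.sum_neg_distrib] at hsum
  linarith

lemma sign_orth_full {M : ℕ} (μ ν : Fin M) :
    ∑ s : Fin M → Bool, (if s μ then (1:ℝ) else -1) * (if s ν then (1:ℝ) else -1)
      = if μ = ν then (2:ℝ) ^ M else 0 := by
  rcases eq_or_ne μ ν with rfl | hne
  · have : ∀ s : Fin M → Bool,
        (if s μ then (1:ℝ) else -1) * (if s μ then (1:ℝ) else -1) = 1 := by
      intro s; cases s μ <;> norm_num
    rw [Finset.sum_congr rfl (fun s _ => this s)]
    simp [Finset.card_univ]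
  · rw [if_neg hne]
    exact sign_orth hne

/-- For β ≤ 1, the only solution of the self-consistency equation
`p_μ = E_s[s_μ tanh(β s·p)]` (uniform i.i.d. signs s) is `p = 0`. -/
theorem selfconsistency_only_zero_highT
    (M : ℕ) (hM : 1 ≤ M) (β : ℝ) (hβ0 : 0 ≤ β) (hβ1 : β ≤ 1)
    (p : Fin M → ℝ)
    (hp : ∀ μ : Fin M,
      p μ = (1 / (2:ℝ) ^ M) * ∑ s : Fin M → Bool,
        (if s μ then (1:ℝ) else -1) *
          Real.tanh (β * ∑ ν : Fin M, (if s ν then (1:ℝ) else -1) * p ν)) :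
    p = 0 := by
  set F : (Fin M → Bool) → ℝ := fun s => ∑ ν : Fin M, (if s ν then (1:ℝ) else -1) * p ν with hF
  have h2M : (0:ℝ) < (2:ℝ) ^ M := by positivity
  -- first moment identity
  have h1 : ∀ μ : Fin M, p μ ^ 2 =
      (1 / (2:ℝ) ^ M) * ∑ s : Fin M → Bool,
        ((if s μ then (1:ℝ) else -1) * p μ) * Real.tanh (β * F s) := by
    intro μ
    rw [pow_two]
    nth_rewrite 2 [hp μ]
    rw [Finset.mul_sum, Finset.mul_sum, Finset.mul_sum]
    exact Finset.sum_congr rfl (fun s _ => by ring)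
  have hsum : ∑ μ, p μ ^ 2 = (1 / (2:ℝ) ^ M) * ∑ s : Fin M → Bool, F s * Real.tanh (β * F s) := by
    rw [Finset.sum_congr rfl (fun μ _ => h1 μ), ← Finset.mul_sum, Finset.sum_comm]
    congr 1
    exact Finset.sum_congr rfl (fun s _ => by rw [← Finset.sum_mul])
  -- second moment identity
  have hsumF2 : ∑ s : Fin M → Bool, F s ^ 2 = (2:ℝ) ^ M * ∑ μ, p μ ^ 2 := by
    have expand : ∀ s : Fin M → Bool, F s ^ 2 =
        ∑ μ : Fin M, ∑ ν : Fin M,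
          ((if s μ then (1:ℝ) else -1) * (if s ν then (1:ℝ) else -1)) * (p μ * p ν) := by
      intro s
      rw [pow_two, hF, Finset.sum_mul_sum]
      exact Finset.sum_congr rfl (fun μ _ => Finset.sum_congr rfl (fun ν _ => by ring))
    rw [Finset.sum_congr rfl (fun s _ => expand s), Finset.sum_comm]
    have inner : ∀ μ : Fin M,
        ∑ s : Fin M → Bool, ∑ ν : Fin M,
          ((if s μ then (1:ℝ) else -1) * (if s ν then (1:ℝ) else -1)) * (p μ * p ν)
        = (2:ℝ) ^ M * p μ ^ 2 := by
      intro μ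
      rw [Finset.sum_comm]
      have : ∀ ν : Fin M,
          ∑ s : Fin M → Bool,
            ((if s μ then (1:ℝ) else -1) * (if s ν then (1:ℝ) else -1)) * (p μ * p ν)
          = (if μ = ν then (2:ℝ) ^ M else 0) * (p μ * p ν) := by
        intro ν
        rw [← Finset.sum_mul, sign_orth_full]
      rw [Finset.sum_congr rfl (fun ν _ => this ν)]
      simp [Finset.sum_ite_eq, pow_two]
    rw [Finset.sum_congr rfl (fun μ _ => inner μ), ← Finset.mul_sum]
  -- equality of the sums
  have htotal : ∑ s : Fin M → Bool, F s * Real.tanh (β * F s) = ∑ s : Fin M → Bool, F s ^ 2 := by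
    rw [hsumF2, hsum]
    field_simp
    simp only [mul_comm β]
  have heach := (Finset.sum_eq_sum_iff_of_le
    (fun s _ => mul_tanh_le_sq hβ0 hβ1 (F s))).1 htotal
  have hF0 : ∀ s : Fin M → Bool, F s = 0 := by
    intro s
    by_contra hz
    exact absurd (heach s (Finset.mem_univ s)) (ne_of_lt (mul_tanh_lt_sq hβ0 hβ1 hz))
  funext μ
  rw [Pi.zero_apply, hp μ]
  have : ∀ s : Fin M → Bool,
      (if s μ then (1:ℝ) else -1) *
        Real.tanh (β * ∑ ν : Fin M, (if s ν then (1:ℝ) else -1) * p ν) = 0 := by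
    intro s
    have h0 : (∑ ν : Fin M, (if s ν = true then (1:ℝ) else -1) * p ν) = 0 := hF0 s
    rw [h0]
    simp
  rw [Finset.sum_congr rfl (fun s _ => this s)]
  simp
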